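/- In a free group F, define α : Set F → Set F by α(∅) = ∅, α({g}) = {g}, and for |L| ≥ 2, α(L) = g·⟨p⟩ if L ⊆ g·⟨p⟩ for some g ∈ F and primitive p, and α(L) = F otherwise. Then α is well-defined on non-singleton sets: if L has at least two elements and L ⊆ g₁·⟨p₁⟩ and L ⊆ g₂·⟨p₂⟩ with p₁, p₂ primitive, then g₁·⟨p₁⟩ = g₂·⟨p₂⟩. -/

import Mathlib

open scoped Pointwise

/-- An element `p` of a free group is primitive if it is nontrivial and its only
roots are `p` itself and `p⁻¹`. -/
def IsPrimitiveElt {A : Type*} (p : FreeGroup A) : Prop :=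
  p ≠ 1 ∧ ∀ (w : FreeGroup A) (l : ℤ), w ^ l = p → w = p ∨ w = p⁻¹

/-- The coset `v·⟨p⟩ = {v * p^k : k ∈ ℤ}`. -/
def coset {A : Type*} (v p : FreeGroup A) : Set (FreeGroup A) :=
  {x | ∃ k : ℤ, x = v * p ^ k}

/-- A free group element is cyclically reduced if its reduced word does not begin
and end with mutually inverse letters. -/
def CyclicallyReduced {A : Type*} [DecidableEq A] (w : FreeGroup A) : Prop :=
  ∀ x y : A × Bool, w.toWord.head? = some x → w.toWord.getLast? = some y →
    ¬(x.1 = y.1 ∧ x.2 = !y.2)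

lemma coset_eq_of_mem {A : Type*} {v p x : FreeGroup A} (hx : x ∈ coset v p) :
    coset v p = coset x p := by
  obtain ⟨k, rfl⟩ := hx
  ext z
  constructor <;> rintro ⟨j, rfl⟩
  · exact ⟨j - k, by group⟩
  · exact ⟨k + j, by group⟩

lemma coset_inv {A : Type*} (v p : FreeGroup A) : coset v p = coset v p⁻¹ := by
  ext z
  constructor <;> rintro ⟨j, rfl⟩
  · exact ⟨-j, by group⟩
  · exact ⟨-j, by group⟩

/-- In a free group, elements with a common nontrivial power have a common root. -/
lemma common_root {A : Type*} (a b : FreeGroup A) (m n : ℤ)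
    (hm : m ≠ 0) (hn : n ≠ 0) (hab : a ^ m = b ^ n) :
    ∃ c : FreeGroup A, (∃ s : ℤ, a = c ^ s) ∧ (∃ t : ℤ, b = c ^ t) := by
  classical
  set H : Subgroup (FreeGroup A) := Subgroup.closure {a, b} with hH
  have ha : a ∈ H := Subgroup.subset_closure (by simp)
  have hb : b ∈ H := Subgroup.subset_closure (by simp)
  set S := IsFreeGroup.Generators H with hS
  -- The generating set of the free group H is a subsingleton.
  have hsub : Subsingleton S := by
    by_contra hns
    rw [not_subsingleton_iff_nontrivial] at hns
    obtain ⟨s, t, hst⟩ := hns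
    set f : FreeGroup S →* Multiplicative (ℤ × ℤ) :=
      FreeGroup.lift (fun x => if x = s then Multiplicative.ofAdd ((1 : ℤ), (0 : ℤ))
        else if x = t then Multiplicative.ofAdd ((0 : ℤ), (1 : ℤ)) else 1) with hf
    set χ : H →* Multiplicative (ℤ × ℤ) :=
      f.comp (IsFreeGroup.mulEquiv H).symm.toMonoidHom with hχ
    set u : Multiplicative (ℤ × ℤ) := χ ⟨a, ha⟩ with hu
    set v : Multiplicative (ℤ × ℤ) := χ ⟨b, hb⟩ with hv
    -- every value of χ lies in the subgroup generated by u and v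
    have key : ∀ (g : FreeGroup A) (hg : g ∈ H),
        χ ⟨g, hg⟩ ∈ Subgroup.closure ({u, v} : Set (Multiplicative (ℤ × ℤ))) := by
      intro g hg
      induction hg using Subgroup.closure_induction with
      | mem x hx =>
        rcases hx with rfl | rfl
        · exact Subgroup.subset_closure (Set.mem_insert _ _)
        · exact Subgroup.subset_closure (Set.mem_insert_of_mem _ rfl)
      | one =>
        have : (⟨1, Subgroup.one_mem H⟩ : H) = 1 := rfl
        rw [this, map_one]; exact Subgroup.one_mem _
      | mul x y hx hy px py =>
        have : (⟨x * y, Subgroup.mul_mem H hx hy⟩ : H) = ⟨x, hx⟩ * ⟨y, hy⟩ := rfl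
        rw [this, map_mul]; exact Subgroup.mul_mem _ px py
      | inv x hx px =>
        have : (⟨x⁻¹, Subgroup.inv_mem H hx⟩ : H) = (⟨x, hx⟩ : H)⁻¹ := rfl
        rw [this, map_inv]; exact Subgroup.inv_mem _ px
    -- the relation between u and v
    have hrelH : (⟨a, ha⟩ : H) ^ m = (⟨b, hb⟩ : H) ^ n := by
      apply Subtype.ext
      push_cast
      exact hab
    have hrel : u ^ m = v ^ n := by rw [hu, hv, ← map_zpow, ← map_zpow, hrelH]
    -- witnesses hitting the two basis vectors
    have hws : χ ((IsFreeGroup.mulEquiv H) (FreeGroup.of s))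
        = Multiplicative.ofAdd ((1 : ℤ), (0 : ℤ)) := by
      rw [hχ]
      simp [hf]
    have hwt : χ ((IsFreeGroup.mulEquiv H) (FreeGroup.of t))
        = Multiplicative.ofAdd ((0 : ℤ), (1 : ℤ)) := by
      rw [hχ]
      simp [hf, hst.symm]
    have h1 : Multiplicative.ofAdd ((1 : ℤ), (0 : ℤ)) ∈
        Subgroup.closure ({u, v} : Set (Multiplicative (ℤ × ℤ))) := by
      have := key _ ((IsFreeGroup.mulEquiv H) (FreeGroup.of s)).2
      rwa [Subtype.coe_eta, hws] at this
    have h2 : Multiplicative.ofAdd ((0 : ℤ), (1 : ℤ)) ∈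
        Subgroup.closure ({u, v} : Set (Multiplicative (ℤ × ℤ))) := by
      have := key _ ((IsFreeGroup.mulEquiv H) (FreeGroup.of t)).2
      rwa [Subtype.coe_eta, hwt] at this
    rw [Subgroup.mem_closure_pair] at h1 h2
    obtain ⟨i, j, hij⟩ := h1
    obtain ⟨i', j', hij'⟩ := h2
    -- move to additive coordinates
    set u1 : ℤ := (Multiplicative.toAdd u).1 with hu1
    set u2 : ℤ := (Multiplicative.toAdd u).2 with hu2
    set v1 : ℤ := (Multiplicative.toAdd v).1 with hv1
    set v2 : ℤ := (Multiplicative.toAdd v).2 with hv2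
    have em1 : m * u1 = n * v1 := by
      have := congrArg (fun z => (Multiplicative.toAdd z).1) hrel
      simpa [smul_eq_mul] using this
    have em2 : m * u2 = n * v2 := by
      have := congrArg (fun z => (Multiplicative.toAdd z).2) hrel
      simpa [smul_eq_mul] using this
    have e11 : i * u1 + j * v1 = 1 := by
      have := congrArg (fun z => (Multiplicative.toAdd z).1) hij
      simpa [smul_eq_mul] using this
    have e12 : i * u2 + j * v2 = 0 := by
      have := congrArg (fun z => (Multiplicative.toAdd z).2) hij
      simpa [smul_eq_mul] using this
    have e21 : i' * u1 + j' * v1 = 0 := by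
      have := congrArg (fun z => (Multiplicative.toAdd z).1) hij'
      simpa [smul_eq_mul] using this
    have e22 : i' * u2 + j' * v2 = 1 := by
      have := congrArg (fun z => (Multiplicative.toAdd z).2) hij'
      simpa [smul_eq_mul] using this
    -- derive a contradiction
    have hA1 : (n * i + j * m) * u1 = n := by linear_combination n * e11 + j * em1
    have hA2 : (n * i + j * m) * u2 = 0 := by linear_combination n * e12 + j * em2
    have hB1 : (n * i' + j' * m) * u1 = 0 := by linear_combination n * e21 + j' * em1
    have hB2 : (n * i' + j' * m) * u2 = n := by linear_combination n * e22 + j' * em2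
    have : n * n = 0 := by
      calc n * n = ((n * i + j * m) * u1) * ((n * i' + j' * m) * u2) := by rw [hA1, hB2]
        _ = ((n * i + j * m) * u2) * ((n * i' + j' * m) * u1) := by ring
        _ = 0 := by rw [hA2, hB1, zero_mul]
    exact hn (by nlinarith [this])
  -- Hence H is cyclic
  obtain ⟨c₀, hc₀⟩ : ∃ c₀ : H, ∀ h : H, ∃ k : ℤ, h = c₀ ^ k := by
    rcases isEmpty_or_nonempty S with he | ⟨⟨s₀⟩⟩
    · refine ⟨1, fun h => ⟨0, ?_⟩⟩
      have hw : (IsFreeGroup.mulEquiv H).symm h = 1 := by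
        generalize (IsFreeGroup.mulEquiv H).symm h = w
        induction w using FreeGroup.induction_on with
        | C1 => rfl
        | of x => exact isEmptyElim x
        | inv_of x ih => rw [ih, inv_one]
        | mul x y ihx ihy => rw [ihx, ihy, one_mul]
      have := congrArg (IsFreeGroup.mulEquiv H) hw
      rw [MulEquiv.apply_symm_apply, map_one] at this
      rw [this, zpow_zero]
    · refine ⟨(IsFreeGroup.mulEquiv H) (FreeGroup.of s₀), fun h => ?_⟩
      have hall : ∀ w : FreeGroup S, ∃ k : ℤ, w = (FreeGroup.of s₀) ^ k := by
        intro w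
        induction w using FreeGroup.induction_on with
        | C1 => exact ⟨0, by rw [zpow_zero]⟩
        | of x => exact ⟨1, by rw [zpow_one, Subsingleton.elim x s₀]⟩
        | inv_of x ih =>
          obtain ⟨k, hk⟩ := ih
          exact ⟨-k, by rw [hk, ← zpow_neg]⟩
        | mul x y ihx ihy =>
          obtain ⟨k, hk⟩ := ihx
          obtain ⟨l, hl⟩ := ihy
          exact ⟨k + l, by rw [hk, hl, zpow_add]⟩
      obtain ⟨k, hk⟩ := hall ((IsFreeGroup.mulEquiv H).symm h)
      refine ⟨k, ?_⟩
      have := congrArg (IsFreeGroup.mulEquiv H) hk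
      rwa [MulEquiv.apply_symm_apply, map_zpow] at this
  obtain ⟨sa, hsa⟩ := hc₀ ⟨a, ha⟩
  obtain ⟨tb, htb⟩ := hc₀ ⟨b, hb⟩
  refine ⟨(c₀ : FreeGroup A), ⟨sa, ?_⟩, ⟨tb, ?_⟩⟩
  · have := congrArg (Subtype.val) hsa
    push_cast at this
    exact this
  · have := congrArg (Subtype.val) htb
    push_cast at this
    exact this

theorem stmt11 {A : Type*} (L : Set (FreeGroup A)) (hL : ∃ x ∈ L, ∃ y ∈ L, x ≠ y)
    (g₁ g₂ p₁ p₂ : FreeGroup A) (hp₁ : IsPrimitiveElt p₁) (hp₂ : IsPrimitiveElt p₂)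
    (h₁ : L ⊆ coset g₁ p₁) (h₂ : L ⊆ coset g₂ p₂) :
    coset g₁ p₁ = coset g₂ p₂ := by
  obtain ⟨x, hx, y, hy, hxy⟩ := hL
  obtain ⟨k1, hk1⟩ := h₁ hx
  obtain ⟨k2, hk2⟩ := h₁ hy
  obtain ⟨k3, hk3⟩ := h₂ hx
  obtain ⟨k4, hk4⟩ := h₂ hy
  have hm : p₁ ^ (k2 - k1) = x⁻¹ * y := by rw [hk1, hk2]; group
  have hn : p₂ ^ (k4 - k3) = x⁻¹ * y := by rw [hk3, hk4]; group
  have hmne : k2 - k1 ≠ 0 := by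
    intro h
    apply hxy
    have : k2 = k1 := by omega
    rw [hk1, hk2, this]
  have hnne : k4 - k3 ≠ 0 := by
    intro h
    apply hxy
    have : k4 = k3 := by omega
    rw [hk3, hk4, this]
  obtain ⟨c, ⟨s, hs⟩, ⟨t, ht⟩⟩ :=
    common_root p₁ p₂ (k2 - k1) (k4 - k3) hmne hnne (by rw [hm, hn])
  -- p₂ is a power of p₁
  have hpt : ∃ t' : ℤ, p₁ ^ t' = p₂ := by
    rcases hp₁.2 c s hs.symm with hc | hc
    · exact ⟨t, by rw [← hc, ← ht]⟩
    · exact ⟨-t, by rw [ht, hc, inv_zpow']⟩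
  obtain ⟨t', ht'⟩ := hpt
  have hcx₁ : coset g₁ p₁ = coset x p₁ := coset_eq_of_mem (h₁ hx)
  have hcx₂ : coset g₂ p₂ = coset x p₂ := coset_eq_of_mem (h₂ hx)
  rcases hp₂.2 p₁ t' ht' with h | h
  · rw [hcx₁, hcx₂, h]
  · rw [hcx₁, hcx₂, h, ← coset_inv]
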